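/- arXiv:1110.4594 — 2 statements merged into one kernel-verified Lean document; each statement's English description precedes it below -/
import Mathlib

section
/- Let a < b be real numbers, I = Icc a b, A ∈ ℝ with A ≠ 0, and let τ, f : ℝ → ℝ be differentiable on I with τ(t) > 0 and A·τ(t)³ − 1 ≠ 0 for all t ∈ I. Suppose f(t)²·(A·τ(t)³ − 1) = 9·A·τ(t)³ for all t ∈ I. Then for every t ∈ I one has f(t) ≠ 0 and f(t)² ≠ 9, and f satisfies the differential equation f′(t) = (1/6)·(9·f(t) − f(t)³)·(τ′(t)/τ(t)). -/
open Set

/-- Converse to separation of variables: a differentiable function `f` with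
`f²·(A·τ³ − 1) = 9·A·τ³` for a nonzero constant `A` is nowhere `0`, has
`f² ≠ 9` everywhere, and satisfies the ODE `f′ = (1/6)(9f − f³)·τ′/τ`. -/
theorem ode_of_first_integral (a b : ℝ) (hab : a < b) (A : ℝ) (hA : A ≠ 0)
    (τ f τ' f' : ℝ → ℝ)
    (hτ : ∀ t ∈ Icc a b, HasDerivWithinAt τ (τ' t) (Icc a b) t)
    (hf : ∀ t ∈ Icc a b, HasDerivWithinAt f (f' t) (Icc a b) t)
    (hτpos : ∀ t ∈ Icc a b, 0 < τ t)
    (hAτ : ∀ t ∈ Icc a b, A * τ t ^ 3 - 1 ≠ 0)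
    (hrel : ∀ t ∈ Icc a b, f t ^ 2 * (A * τ t ^ 3 - 1) = 9 * A * τ t ^ 3) :
    ∀ t ∈ Icc a b, f t ≠ 0 ∧ f t ^ 2 ≠ 9 ∧
      f' t = (1 / 6) * (9 * f t - f t ^ 3) * (τ' t / τ t) := by
  intro t ht
  have hτt := hτpos t ht
  have hτne : τ t ≠ 0 := ne_of_gt hτt
  have hAτt := hAτ t ht
  have hrelt := hrel t ht
  have hfne : f t ≠ 0 := by
    intro h0
    rw [h0] at hrelt
    have : (9 : ℝ) * A * τ t ^ 3 = 0 := by linarith [hrelt]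
    have h2 : A * τ t ^ 3 ≠ 0 := by positivity
    exact h2 (by linarith)
  have hf9 : f t ^ 2 ≠ 9 := by
    intro h9
    rw [h9] at hrelt
    nlinarith [hrelt]
  refine ⟨hfne, hf9, ?_⟩
  -- derivative of the first integral
  set s := Icc a b
  set D : ℝ → ℝ := fun u =>
    2 * f u * f' u * (A * τ u ^ 3 - 1) + f u ^ 2 * (A * (3 * τ u ^ 2 * τ' u))
      - 9 * A * (3 * τ u ^ 2 * τ' u) with hDdef
  have hg : HasDerivWithinAt (fun u => f u ^ 2 * (A * τ u ^ 3 - 1) - 9 * A * τ u ^ 3)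
      (D t) s t := by
    have h1 : HasDerivWithinAt (fun u => f u ^ 2) (2 * f t * f' t) s t := by
      have := (hf t ht).pow 2
      simpa [Pi.pow_def, mul_comm, mul_assoc, mul_left_comm] using this
    have h2 : HasDerivWithinAt (fun u => τ u ^ 3) (3 * τ t ^ 2 * τ' t) s t := by
      have := (hτ t ht).pow 3
      simpa [Pi.pow_def, mul_comm, mul_assoc, mul_left_comm] using this
    have h3 : HasDerivWithinAt (fun u => A * τ u ^ 3 - 1)
        (A * (3 * τ t ^ 2 * τ' t)) s t := (h2.const_mul A).sub_const 1
    have h4 : HasDerivWithinAt (fun u => 9 * A * τ u ^ 3)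
        (9 * A * (3 * τ t ^ 2 * τ' t)) s t := h2.const_mul (9 * A)
    simpa [Pi.mul_def, Pi.sub_def, hDdef, mul_comm, mul_assoc, mul_left_comm] using (h1.mul h3).sub h4
  have hzero : ∀ u ∈ s, (fun u => f u ^ 2 * (A * τ u ^ 3 - 1) - 9 * A * τ u ^ 3) u = 0 := by
    intro u hu
    have := hrel u hu
    simp [this]
  have hg0 : HasDerivWithinAt (fun _ : ℝ => (0 : ℝ)) (D t) s t :=
    hg.congr (fun u hu => (hzero u hu).symm) (hzero t ht).symm
  have hUD : UniqueDiffWithinAt ℝ s t := (uniqueDiffOn_Icc hab) t ht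
  have hD0 : D t = 0 := by
    have e1 := hg0.derivWithin hUD
    have e2 := (hasDerivWithinAt_const t s (0 : ℝ)).derivWithin hUD
    rw [e1] at e2
    exact e2.symm ▸ e2
  have hDt : 2 * f t * f' t * (A * τ t ^ 3 - 1) + f t ^ 2 * (A * (3 * τ t ^ 2 * τ' t))
      - 9 * A * (3 * τ t ^ 2 * τ' t) = 0 := hD0
  have hf9' : f t ^ 2 - 9 ≠ 0 := sub_ne_zero.mpr hf9
  have key3 : 3 * f t * (6 * f' t * τ t) = 3 * f t * ((9 * f t - f t ^ 3) * τ' t) := by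
    linear_combination ((f t ^ 2 - 9) * τ t) * hDt -
      (2 * f t * f' t * τ t + 3 * τ' t * f t ^ 2 - 27 * τ' t) * hrelt
  have key : 6 * f' t * τ t = (9 * f t - f t ^ 3) * τ' t :=
    mul_left_cancel₀ (by simpa using hfne) key3
  field_simp
  linarith [key]
end

section
/- Let a < b be real numbers, I = Icc a b, and let τ : ℝ → ℝ be continuously differentiable on I with τ(t) > 0 for all t ∈ I. Let f : ℝ → ℝ be differentiable on I with f′(t) = (1/6)·(9·f(t) − f(t)³)·(τ′(t)/τ(t)) for all t ∈ I. Then exactly one of the following holds: (i) f(t) = 0 for all t ∈ I; (ii) f(t) = 3 for all t ∈ I; (iii) f(t) = −3 for all t ∈ I; or (iv) f(t) ∉ {0, 3, −3} for all t ∈ I and there exists a constant A ∈ ℝ, A ≠ 0, such that f(t)²·(A·τ(t)³ − 1) = 9·A·τ(t)³ for all t ∈ I. -/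
open Set

/-- Constancy of `(f²-9)τ³/f²` where `f ≠ 0`. -/
lemma ode_auxH (a b : ℝ) (τ f τ' : ℝ → ℝ)
    (hτ : ∀ t ∈ Icc a b, HasDerivWithinAt τ (τ' t) (Icc a b) t)
    (hτpos : ∀ t ∈ Icc a b, 0 < τ t)
    (hf : ∀ t ∈ Icc a b,
      HasDerivWithinAt f ((1 / 6) * (9 * f t - f t ^ 3) * (τ' t / τ t)) (Icc a b) t)
    (hne : ∀ t ∈ Icc a b, f t ≠ 0) :
    ∀ t ∈ Icc a b, (f t ^ 2 - 9) * τ t ^ 3 / f t ^ 2 = (f a ^ 2 - 9) * τ a ^ 3 / f a ^ 2 := by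
  have key : ∀ t ∈ Icc a b,
      HasDerivWithinAt (fun s => (f s ^ 2 - 9) * τ s ^ 3 / f s ^ 2) 0 (Icc a b) t := by
    intro t ht
    have hft := hne t ht
    have hτt := (hτpos t ht).ne'
    have h1 := ((((hf t ht).pow 2).sub_const 9).mul ((hτ t ht).pow 3)).div
      ((hf t ht).pow 2) (pow_ne_zero 2 hft)
    refine h1.congr_deriv ?_
    simp only [Pi.pow_apply, Pi.mul_apply]
    push_cast
    field_simp
    ring
  have hcont : ContinuousOn (fun s => (f s ^ 2 - 9) * τ s ^ 3 / f s ^ 2) (Icc a b) :=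
    fun t ht => (key t ht).continuousWithinAt
  exact constant_of_has_deriv_right_zero hcont (fun x hx =>
    (key x (Ico_subset_Icc_self hx)).mono_of_mem_nhdsWithin (Icc_mem_nhdsGE_of_mem hx))

/-- Constancy of `f²/((f²-9)τ³)` where `f² ≠ 9`. -/
lemma ode_auxG (a b : ℝ) (τ f τ' : ℝ → ℝ)
    (hτ : ∀ t ∈ Icc a b, HasDerivWithinAt τ (τ' t) (Icc a b) t)
    (hτpos : ∀ t ∈ Icc a b, 0 < τ t)
    (hf : ∀ t ∈ Icc a b,
      HasDerivWithinAt f ((1 / 6) * (9 * f t - f t ^ 3) * (τ' t / τ t)) (Icc a b) t)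
    (hne : ∀ t ∈ Icc a b, f t ^ 2 ≠ 9) :
    ∀ t ∈ Icc a b, f t ^ 2 / ((f t ^ 2 - 9) * τ t ^ 3)
      = f a ^ 2 / ((f a ^ 2 - 9) * τ a ^ 3) := by
  have key : ∀ t ∈ Icc a b,
      HasDerivWithinAt (fun s => f s ^ 2 / ((f s ^ 2 - 9) * τ s ^ 3)) 0 (Icc a b) t := by
    intro t ht
    have hft := sub_ne_zero_of_ne (hne t ht)
    have hτt := (hτpos t ht).ne'
    have h1 := ((hf t ht).pow 2).div
      ((((hf t ht).pow 2).sub_const 9).mul ((hτ t ht).pow 3))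
      (mul_ne_zero hft (pow_ne_zero 3 hτt))
    refine h1.congr_deriv ?_
    simp only [Pi.pow_apply, Pi.mul_apply]
    push_cast
    field_simp
    ring
  have hcont : ContinuousOn (fun s => f s ^ 2 / ((f s ^ 2 - 9) * τ s ^ 3)) (Icc a b) :=
    fun t ht => (key t ht).continuousWithinAt
  exact constant_of_has_deriv_right_zero hcont (fun x hx =>
    (key x (Ico_subset_Icc_self hx)).mono_of_mem_nhdsWithin (Icc_mem_nhdsGE_of_mem hx))

/-- Propagation of a locally constant condition on a connected interval. -/
lemma ode_clopen_propagate (a b : ℝ) (g : ℝ → ℝ) (c : ℝ)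
    (hg : ContinuousOn g (Icc a b))
    (hloc : ∀ x ∈ Icc a b, g x = c → ∃ δ > 0, ∀ t ∈ Icc a b, dist t x < δ → g t = c)
    (t0 : ℝ) (ht0 : t0 ∈ Icc a b) (hgt0 : g t0 = c) :
    ∀ t ∈ Icc a b, g t = c := by
  have hpc : PreconnectedSpace (Icc a b) := Subtype.preconnectedSpace isPreconnected_Icc
  let s : Set (Icc a b) := {x | g x = c}
  have hcl : IsClosed s := isClosed_eq hg.restrict continuous_const
  have hop : IsOpen s := by
    rw [isOpen_iff_mem_nhds]
    intro x hx
    obtain ⟨δ, hδpos, hδ⟩ := hloc x x.2 hx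
    refine Filter.mem_of_superset
      (((Metric.isOpen_ball (x := (x : ℝ)) (ε := δ)).preimage
        continuous_subtype_val).mem_nhds ?_) ?_
    · exact Metric.mem_ball_self hδpos
    · intro y hy
      exact hδ y y.2 hy
  have huniv : s = univ := IsClopen.eq_univ ⟨hcl, hop⟩ ⟨⟨t0, ht0⟩, hgt0⟩
  intro t ht
  have : (⟨t, ht⟩ : Icc a b) ∈ s := huniv ▸ mem_univ _
  exact this

/-- Classification of the solutions of the ODE `f′ = (1/6)(9f − f³)·τ′/τ`
(with `τ` positive and `C¹`): `f` is identically `0`, identically `3`,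
identically `−3`, or nowhere in `{0, 3, −3}` and given implicitly by
`f²·(A·τ³ − 1) = 9·A·τ³` for some nonzero constant `A`. -/
theorem ode_solution_classification (a b : ℝ) (hab : a < b) (τ f τ' : ℝ → ℝ)
    (hτ : ∀ t ∈ Icc a b, HasDerivWithinAt τ (τ' t) (Icc a b) t)
    (hτ' : ContinuousOn τ' (Icc a b))
    (hτpos : ∀ t ∈ Icc a b, 0 < τ t)
    (hf : ∀ t ∈ Icc a b,
      HasDerivWithinAt f ((1 / 6) * (9 * f t - f t ^ 3) * (τ' t / τ t)) (Icc a b) t) :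
    (∀ t ∈ Icc a b, f t = 0) ∨ (∀ t ∈ Icc a b, f t = 3) ∨
    (∀ t ∈ Icc a b, f t = -3) ∨
    ((∀ t ∈ Icc a b, f t ≠ 0 ∧ f t ≠ 3 ∧ f t ≠ -3) ∧
      ∃ A : ℝ, A ≠ 0 ∧
        ∀ t ∈ Icc a b, f t ^ 2 * (A * τ t ^ 3 - 1) = 9 * A * τ t ^ 3) := by
  have hfc : ContinuousOn f (Icc a b) := fun t ht => (hf t ht).continuousWithinAt
  have ha : a ∈ Icc a b := ⟨le_refl a, hab.le⟩
  by_cases h0 : ∃ t0 ∈ Icc a b, f t0 = 0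
  · -- f vanishes somewhere hence everywhere
    obtain ⟨t0, ht0, hft0⟩ := h0
    left
    refine ode_clopen_propagate a b f 0 hfc ?_ t0 ht0 hft0
    intro x hx hfx
    obtain ⟨δ, hδpos, hδ⟩ := Metric.continuousWithinAt_iff.mp (hfc x hx) 3 (by norm_num)
    refine ⟨δ / 2, by positivity, ?_⟩
    set c' := max a (x - δ / 2) with hc'
    set d' := min b (x + δ / 2) with hd'
    have hsub : Icc c' d' ⊆ Icc a b := Icc_subset_Icc (le_max_left _ _) (min_le_left _ _)
    have hx' : x ∈ Icc c' d' := ⟨max_le hx.1 (by linarith), le_min hx.2 (by linarith)⟩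
    have hball : ∀ t ∈ Icc c' d', dist t x < δ := by
      intro t ht
      have h1 : x - δ / 2 ≤ t := le_trans (le_max_right _ _) ht.1
      have h2 : t ≤ x + δ / 2 := le_trans ht.2 (min_le_right _ _)
      rw [Real.dist_eq, abs_lt]
      constructor <;> linarith
    have hne9 : ∀ t ∈ Icc c' d', f t ^ 2 ≠ 9 := by
      intro t ht h9
      have hd := hδ (hsub ht) (hball t ht)
      rw [Real.dist_eq, hfx, sub_zero] at hd
      nlinarith [abs_nonneg (f t), sq_abs (f t)]
    have hG := ode_auxG c' d' τ f τ' (fun t ht => (hτ t (hsub ht)).mono hsub)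
      (fun t ht => hτpos t (hsub ht)) (fun t ht => (hf t (hsub ht)).mono hsub) hne9
    have hGx : f x ^ 2 / ((f x ^ 2 - 9) * τ x ^ 3) = 0 := by rw [hfx]; norm_num
    intro t ht hdist
    rw [Real.dist_eq, abs_lt] at hdist
    have ht' : t ∈ Icc c' d' :=
      ⟨max_le ht.1 (by linarith), le_min ht.2 (by linarith)⟩
    have hGt : f t ^ 2 / ((f t ^ 2 - 9) * τ t ^ 3) = 0 :=
      (hG t ht').trans ((hG x hx').symm.trans hGx)
    have hden : (f t ^ 2 - 9) * τ t ^ 3 ≠ 0 :=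
      mul_ne_zero (sub_ne_zero_of_ne (hne9 t ht'))
        (pow_ne_zero 3 (hτpos t (hsub ht')).ne')
    rcases div_eq_zero_iff.mp hGt with h | h
    · exact (pow_eq_zero_iff two_ne_zero).mp h
    · exact absurd h hden
  · push_neg at h0
    by_cases h9 : ∃ t0 ∈ Icc a b, f t0 ^ 2 = 9
    · -- f² = 9 everywhere
      obtain ⟨t0, ht0, hft0⟩ := h9
      have hsq : ∀ t ∈ Icc a b, f t ^ 2 = 9 := by
        refine ode_clopen_propagate a b (fun t => f t ^ 2) 9
          ((hfc.pow 2)) ?_ t0 ht0 hft0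
        intro x hx hfx
        obtain ⟨δ, hδpos, hδ⟩ := Metric.continuousWithinAt_iff.mp (hfc x hx) 3 (by norm_num)
        refine ⟨δ / 2, by positivity, ?_⟩
        set c' := max a (x - δ / 2) with hc'
        set d' := min b (x + δ / 2) with hd'
        have hsub : Icc c' d' ⊆ Icc a b := Icc_subset_Icc (le_max_left _ _) (min_le_left _ _)
        have hx' : x ∈ Icc c' d' := ⟨max_le hx.1 (by linarith), le_min hx.2 (by linarith)⟩
        have hball : ∀ t ∈ Icc c' d', dist t x < δ := by
          intro t ht
          have h1 : x - δ / 2 ≤ t := le_trans (le_max_right _ _) ht.1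
          have h2 : t ≤ x + δ / 2 := le_trans ht.2 (min_le_right _ _)
          rw [Real.dist_eq, abs_lt]
          constructor <;> linarith
        have hne0 : ∀ t ∈ Icc c' d', f t ≠ 0 := fun t ht => h0 t (hsub ht)
        have hH := ode_auxH c' d' τ f τ' (fun t ht => (hτ t (hsub ht)).mono hsub)
          (fun t ht => hτpos t (hsub ht)) (fun t ht => (hf t (hsub ht)).mono hsub) hne0
        have hfx' : f x ^ 2 = 9 := hfx
        have hHx : (f x ^ 2 - 9) * τ x ^ 3 / f x ^ 2 = 0 := by rw [hfx']; norm_num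
        intro t ht hdist
        rw [Real.dist_eq, abs_lt] at hdist
        have ht' : t ∈ Icc c' d' :=
          ⟨max_le ht.1 (by linarith), le_min ht.2 (by linarith)⟩
        have hHt : (f t ^ 2 - 9) * τ t ^ 3 / f t ^ 2 = 0 :=
          (hH t ht').trans ((hH x hx').symm.trans hHx)
        have hden : f t ^ 2 ≠ 0 := pow_ne_zero 2 (hne0 t ht')
        show f t ^ 2 = 9
        rcases div_eq_zero_iff.mp hHt with h | h
        · rcases mul_eq_zero.mp h with h | h
          · linarith [sub_eq_zero.mp h]
          · exact absurd h (pow_ne_zero 3 (hτpos t (hsub ht')).ne')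
        · exact absurd h hden
      -- sign of f is constant
      have hcases : f a = 3 ∨ f a = -3 := by
        have h := hsq a ha
        have : (f a - 3) * (f a + 3) = 0 := by linarith [hsq a ha]
        rcases mul_eq_zero.mp this with h | h
        · left; linarith
        · right; linarith
      have hsame : ∀ t ∈ Icc a b, f t = f a := by
        intro t ht
        by_contra hne
        have h9t := hsq t ht
        have h9a := hsq a ha
        have hta : f t = -f a := by
          have : (f t - f a) * (f t + f a) = 0 := by nlinarith
          rcases mul_eq_zero.mp this with h | h
          · exact absurd (by linarith) hne
          · linarith
        -- IVT gives a zero of f between a and t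
        have habt : a ≤ t := ht.1
        have hcont' : ContinuousOn f (Icc a t) :=
          hfc.mono (Icc_subset_Icc (le_refl _) ht.2)
        have hzero : (0 : ℝ) ∈ f '' Icc a t := by
          rcases hcases with h3 | h3
          · have : (0 : ℝ) ∈ Icc (f t) (f a) := by
              rw [h3, hta, h3]; norm_num
            exact intermediate_value_Icc' habt hcont' this
          · have : (0 : ℝ) ∈ Icc (f a) (f t) := by
              rw [h3, hta, h3]; norm_num
            exact intermediate_value_Icc habt hcont' this
        obtain ⟨s, hs, hfs⟩ := hzero
        exact h0 s ⟨hs.1, le_trans hs.2 ht.2⟩ hfs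
      rcases hcases with h3 | h3
      · right; left; intro t ht; rw [hsame t ht, h3]
      · right; right; left; intro t ht; rw [hsame t ht, h3]
    · -- generic case
      push_neg at h9
      right; right; right
      constructor
      · intro t ht
        exact ⟨h0 t ht, fun h => h9 t ht (by rw [h]; norm_num),
          fun h => h9 t ht (by rw [h]; norm_num)⟩
      · refine ⟨f a ^ 2 / ((f a ^ 2 - 9) * τ a ^ 3), ?_, ?_⟩
        · exact div_ne_zero (pow_ne_zero 2 (h0 a ha))
            (mul_ne_zero (sub_ne_zero_of_ne (h9 a ha)) (pow_ne_zero 3 (hτpos a ha).ne'))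
        · intro t ht
          have hG := ode_auxG a b τ f τ' hτ hτpos hf h9 t ht
          have hden : (f t ^ 2 - 9) * τ t ^ 3 ≠ 0 :=
            mul_ne_zero (sub_ne_zero_of_ne (h9 t ht)) (pow_ne_zero 3 (hτpos t ht).ne')
          have := (div_eq_iff hden).mp hG
          linear_combination -this
end
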